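/- If a sequence (B_m)_{m≥1} of reals ≥ 1 satisfies B_m ≤ (1/√2)·(Γ(3/2 − 1/m)/√π)^{−m/(2m−2)} · B_{m−1} for all m sufficiently large, and B_m = o(m), then there exists κ > 0 such that B_m ≤ κ · m^{(2 − ln 2 − γ)/2} for all m ≥ 1. -/

import Mathlib

open Real Filter

lemma Gamma_three_half_eq : Real.Gamma (3 / 2) = Real.sqrt π / 2 := by
  have h := Real.Gamma_add_one (show (1 : ℝ) / 2 ≠ 0 by norm_num)
  rw [Real.Gamma_one_half_eq] at h
  rw [show (3 : ℝ) / 2 = 1 / 2 + 1 by norm_num, h]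
  ring

lemma hasDerivAt_Gamma_three_half :
    HasDerivAt Real.Gamma
      (Real.sqrt π / 2 * (2 - 2 * Real.log 2 - Real.eulerMascheroniConstant)) (3 / 2) := by
  have h1 := Real.hasDerivAt_Gamma_one_half
  have e : (1 / 2 : ℝ) = 3 / 2 - 1 := by norm_num
  rw [e] at h1
  have hsub : HasDerivAt (fun x : ℝ => x - 1) 1 (3 / 2 : ℝ) := (hasDerivAt_id _).sub_const 1
  have hcomp := h1.comp (3 / 2 : ℝ) hsub
  have hprod := hsub.mul hcomp
  have hev : Real.Gamma =ᶠ[nhds (3 / 2 : ℝ)] fun x : ℝ => (x - 1) * Real.Gamma (x - 1) := by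
    filter_upwards [eventually_gt_nhds (show (1 : ℝ) < 3 / 2 by norm_num)] with x hx
    have hx0 : x - 1 ≠ 0 := by intro h; rw [sub_eq_zero] at h; simp [h] at hx
    have h := Real.Gamma_add_one hx0
    rw [sub_add_cancel] at h
    exact h
  have := hprod.congr_of_eventuallyEq hev
  refine this.congr_deriv ?_
  simp only [Function.comp_apply]
  rw [show (3 / 2 : ℝ) - 1 = 1 / 2 by norm_num, Real.Gamma_one_half_eq]
  ring

lemma Gamma_tangent {y : ℝ} (h0 : 0 < y) (h1 : y < 3 / 2) :
    Real.sqrt π / 2 -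
        (3 / 2 - y) * (Real.sqrt π / 2 * (2 - 2 * Real.log 2 - Real.eulerMascheroniConstant)) ≤
      Real.Gamma y := by
  have hd := hasDerivAt_Gamma_three_half
  have hs := Real.convexOn_Gamma.slope_le_deriv (Set.mem_Ioi.mpr h0)
    (Set.mem_Ioi.mpr (show (0:ℝ) < 3/2 by norm_num)) h1 hd.differentiableAt
  rw [hd.deriv, slope_def_field] at hs
  have h32 : (0 : ℝ) < 3 / 2 - y := by linarith
  rw [div_le_iff₀ h32] at hs
  have hg := Gamma_three_half_eq
  nlinarith [hs]

set_option maxHeartbeats 1000000 in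
lemma step_ineq (k : ℕ) (hk : 2 ≤ k) :
    (1 / Real.sqrt 2) *
        (Real.Gamma (3 / 2 - 1 / (k : ℝ)) / Real.sqrt π) ^ (-(k : ℝ) / (2 * k - 2)) ≤
      Real.exp
        (((2 - Real.log 2 - Real.eulerMascheroniConstant) / 2 * Real.log k - 1 / (k : ℝ)) -
          ((2 - Real.log 2 - Real.eulerMascheroniConstant) / 2 * Real.log ((k : ℝ) - 1) -
            1 / ((k : ℝ) - 1))) := by
  set x : ℝ := (k : ℝ) with hxdef
  set δ : ℝ := 2 - 2 * Real.log 2 - Real.eulerMascheroniConstant with hδdef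
  set α : ℝ := (2 - Real.log 2 - Real.eulerMascheroniConstant) / 2 with hαdef
  have hx : (2 : ℝ) ≤ x := by rw [hxdef]; exact_mod_cast hk
  have hx0 : (0 : ℝ) < x := by linarith
  have hx1 : (0 : ℝ) < x - 1 := by linarith
  have hγ1 := Real.one_half_lt_eulerMascheroniConstant
  have hγ2 := Real.eulerMascheroniConstant_lt_two_thirds
  have hl1 := Real.log_two_gt_d9
  have hl2 := Real.log_two_lt_d9
  have hδle : δ ≤ 1 / 2 := by rw [hδdef]; nlinarith
  have hδge : -(1 / 2 : ℝ) ≤ δ := by rw [hδdef]; nlinarith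
  have hα0 : (0 : ℝ) ≤ α := by rw [hαdef]; nlinarith
  have hαδ : α + δ ^ 2 ≤ 1 := by
    nlinarith [mul_nonneg (show (0:ℝ) ≤ 1/2 - δ by linarith) (show (0:ℝ) ≤ 1/2 + δ by linarith)]
  have ht : δ / x ≤ 1 / 2 := by rw [div_le_iff₀ hx0]; nlinarith
  have ht1 : (0 : ℝ) < 1 - δ / x := by linarith
  have hA0 : (0 : ℝ) < (1 - δ / x) / 2 := by linarith
  -- tangent line bound
  have htan : (1 - δ / x) / 2 ≤ Real.Gamma (3 / 2 - 1 / x) / Real.sqrt π := by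
    have hinvx : 0 < 1 / x := by positivity
    have hinvx2 : 1 / x ≤ 1 / 2 := by rw [div_le_div_iff₀ hx0 two_pos]; linarith
    have hy0 : (0 : ℝ) < 3 / 2 - 1 / x := by linarith
    have hy1 : 3 / 2 - 1 / x < 3 / 2 := by linarith
    have htg := Gamma_tangent hy0 hy1
    rw [← hδdef] at htg
    have hπ : 0 < Real.sqrt π := Real.sqrt_pos.mpr Real.pi_pos
    rw [le_div_iff₀ hπ]
    have e : (1 - δ / x) / 2 * Real.sqrt π =
        Real.sqrt π / 2 - (3 / 2 - (3 / 2 - 1 / x)) * (Real.sqrt π / 2 * δ) := by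
      field_simp
      ring
    rw [e]; exact htg
  have hp : -x / (2 * x - 2) ≤ 0 :=
    div_nonpos_of_nonpos_of_nonneg (by linarith) (by linarith)
  have hmono : (Real.Gamma (3 / 2 - 1 / x) / Real.sqrt π) ^ (-x / (2 * x - 2)) ≤
      ((1 - δ / x) / 2) ^ (-x / (2 * x - 2)) :=
    Real.rpow_le_rpow_of_nonpos hA0 htan hp
  have hhalf : (0 : ℝ) < 1 / Real.sqrt 2 := by positivity
  have hrp : (0 : ℝ) < ((1 - δ / x) / 2) ^ (-x / (2 * x - 2)) := Real.rpow_pos_of_pos hA0 _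
  calc (1 / Real.sqrt 2) * (Real.Gamma (3 / 2 - 1 / x) / Real.sqrt π) ^ (-x / (2 * x - 2))
      ≤ (1 / Real.sqrt 2) * ((1 - δ / x) / 2) ^ (-x / (2 * x - 2)) :=
        mul_le_mul_of_nonneg_left hmono hhalf.le
    _ = Real.exp (Real.log ((1 / Real.sqrt 2) * ((1 - δ / x) / 2) ^ (-x / (2 * x - 2)))) :=
        (Real.exp_log (by positivity)).symm
    _ ≤ Real.exp ((α * Real.log x - 1 / x) - (α * Real.log (x - 1) - 1 / (x - 1))) := by
        apply Real.exp_le_exp.mpr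
        rw [Real.log_mul (ne_of_gt hhalf) (ne_of_gt hrp), Real.log_rpow hA0,
          Real.log_div (ne_of_gt ht1) two_ne_zero, one_div, Real.log_inv,
          Real.log_sqrt (by norm_num : (0:ℝ) ≤ 2)]
        set u : ℝ := Real.log (1 - δ / x) with hudef
        set Lx : ℝ := Real.log x
        set Lx1 : ℝ := Real.log (x - 1)
        -- bound -u
        have hu : -u ≤ δ / x + 2 * (δ / x) ^ 2 := by
          have h1 : Real.log ((1 - δ / x)⁻¹) ≤ (1 - δ / x)⁻¹ - 1 :=
            Real.log_le_sub_one_of_pos (by positivity)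
          rw [Real.log_inv, ← hudef] at h1
          have h2 : (1 - δ / x)⁻¹ - 1 ≤ δ / x + 2 * (δ / x) ^ 2 := by
            rw [inv_eq_one_div, div_sub' (ne_of_gt ht1), div_le_iff₀ ht1]
            nlinarith
          linarith
        have hL : 1 / x ≤ Lx - Lx1 := by
          have h1 : Real.log ((x - 1) / x) ≤ (x - 1) / x - 1 :=
            Real.log_le_sub_one_of_pos (by positivity)
          rw [Real.log_div (ne_of_gt hx1) (ne_of_gt hx0)] at h1
          have h2 : (x - 1) / x - 1 = -(1 / x) := by field_simp; ring
          rw [h2] at h1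
          linarith
        have h2x2 : 2 * x - 2 ≠ 0 := ne_of_gt (by linarith)
        have hxne : x ≠ 0 := ne_of_gt hx0
        have hx1ne : x - 1 ≠ 0 := ne_of_gt hx1
        have e1 : -(Real.log 2 / 2) + (-x / (2 * x - 2)) * (u - Real.log 2) =
            Real.log 2 / (2 * (x - 1)) + (x / (2 * (x - 1))) * (-u) := by
          field_simp
          ring
        have e2 : (x / (2 * (x - 1))) * (-u) ≤
            (x / (2 * (x - 1))) * (δ / x + 2 * (δ / x) ^ 2) :=
          mul_le_mul_of_nonneg_left hu (by positivity)
        have e3 : (x / (2 * (x - 1))) * (δ / x + 2 * (δ / x) ^ 2) =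
            δ / (2 * (x - 1)) + δ ^ 2 / (x * (x - 1)) := by
          field_simp
        have key : Real.log 2 / (2 * (x - 1)) + δ / (2 * (x - 1)) + δ ^ 2 / (x * (x - 1)) -
            (1 / (x - 1) - 1 / x + α * (1 / x)) = (α + δ ^ 2 - 1) / (x * (x - 1)) := by
          rw [hαdef, hδdef]
          field_simp
          ring
        have keyle : (α + δ ^ 2 - 1) / (x * (x - 1)) ≤ 0 :=
          div_nonpos_of_nonpos_of_nonneg (by linarith) (by positivity)
        have hm : α * (1 / x) ≤ α * (Lx - Lx1) := mul_le_mul_of_nonneg_left hL hα0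
        linarith

/-- Abstract form of the real-case Corollary 3.3. -/
theorem multilinear_bh_growth_real (B : ℕ → ℝ) (hB1 : ∀ m, 1 ≤ m → 1 ≤ B m)
    (hrec : ∃ M : ℕ, ∀ m : ℕ, M ≤ m →
      B m ≤ (1 / Real.sqrt 2) *
          (Real.Gamma (3 / 2 - 1 / (m : ℝ)) / Real.sqrt π) ^ (-(m : ℝ) / (2 * m - 2)) *
        B (m - 1))
    (hlittleo : Tendsto (fun m : ℕ => B m / (m : ℝ)) atTop (nhds 0)) :
    ∃ κ : ℝ, 0 < κ ∧ ∀ m : ℕ, 1 ≤ m →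
      B m ≤ κ * (m : ℝ) ^ ((2 - Real.log 2 - Real.eulerMascheroniConstant) / 2) := by
  obtain ⟨M, hM⟩ := hrec
  set α : ℝ := (2 - Real.log 2 - Real.eulerMascheroniConstant) / 2 with hαdef
  have hα0 : (0 : ℝ) ≤ α := by
    rw [hαdef]
    have := Real.eulerMascheroniConstant_lt_two_thirds
    have := Real.log_two_lt_d9
    nlinarith
  set φ : ℝ → ℝ := fun t => α * Real.log t - 1 / t with hφdef
  set N : ℕ := max M 2 with hNdef
  have hN2 : 2 ≤ N := le_max_right _ _
  have hNM : M ≤ N := le_max_left _ _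
  have hN1 : 1 ≤ N := le_trans (by norm_num) hN2
  -- the inductive telescoping bound
  have claim : ∀ n : ℕ, B (N + n) ≤ B N * Real.exp (φ ((N + n : ℕ) : ℝ) - φ ((N : ℕ) : ℝ)) := by
    intro n
    induction n with
    | zero => simp
    | succ n ih =>
      have hk2 : 2 ≤ N + n + 1 := by omega
      have hrecm := hM (N + n + 1) (by omega)
      have hsub : (N + n + 1) - 1 = N + n := by omega
      rw [hsub] at hrecm
      have hstep := step_ineq (N + n + 1) hk2
      rw [← hαdef] at hstep
      have hcast : ((N + n : ℕ) : ℝ) = ((N + n + 1 : ℕ) : ℝ) - 1 := by push_cast; ring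
      have hstep' : (1 / Real.sqrt 2) *
          (Real.Gamma (3 / 2 - 1 / ((N + n + 1 : ℕ) : ℝ)) / Real.sqrt π) ^
            (-((N + n + 1 : ℕ) : ℝ) / (2 * ((N + n + 1 : ℕ) : ℝ) - 2)) ≤
          Real.exp (φ ((N + n + 1 : ℕ) : ℝ) - φ ((N + n : ℕ) : ℝ)) := by
        rw [hφdef, hcast]
        exact hstep
      have hBnn : (0 : ℝ) ≤ B (N + n) := le_trans zero_le_one (hB1 _ (by omega))
      calc B (N + n + 1) ≤ (1 / Real.sqrt 2) *
              (Real.Gamma (3 / 2 - 1 / ((N + n + 1 : ℕ) : ℝ)) / Real.sqrt π) ^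
                (-((N + n + 1 : ℕ) : ℝ) / (2 * ((N + n + 1 : ℕ) : ℝ) - 2)) * B (N + n) := hrecm
        _ ≤ Real.exp (φ ((N + n + 1 : ℕ) : ℝ) - φ ((N + n : ℕ) : ℝ)) * B (N + n) :=
            mul_le_mul_of_nonneg_right hstep' hBnn
        _ ≤ Real.exp (φ ((N + n + 1 : ℕ) : ℝ) - φ ((N + n : ℕ) : ℝ)) *
              (B N * Real.exp (φ ((N + n : ℕ) : ℝ) - φ ((N : ℕ) : ℝ))) :=
            mul_le_mul_of_nonneg_left ih (Real.exp_nonneg _)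
        _ = B N * Real.exp (φ ((N + n + 1 : ℕ) : ℝ) - φ ((N : ℕ) : ℝ)) := by
            rw [mul_comm, mul_assoc, ← Real.exp_add]; ring_nf
  -- tail bound
  set κ₂ : ℝ := B N * Real.exp (1 - φ ((N : ℕ) : ℝ)) with hκ₂def
  have hBN1 : 1 ≤ B N := hB1 N hN1
  have hκ₂pos : 0 < κ₂ := mul_pos (by linarith) (Real.exp_pos _)
  have htail : ∀ m : ℕ, N ≤ m → B m ≤ κ₂ * (m : ℝ) ^ α := by
    intro m hm
    obtain ⟨n, rfl⟩ := Nat.exists_eq_add_of_le hm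
    have h1 := claim n
    have hmpos : (0 : ℝ) < ((N + n : ℕ) : ℝ) := by
      have : 0 < N + n := by omega
      exact_mod_cast this
    have hφle : φ ((N + n : ℕ) : ℝ) - φ ((N : ℕ) : ℝ) ≤
        (1 - φ ((N : ℕ) : ℝ)) + α * Real.log ((N + n : ℕ) : ℝ) := by
      rw [hφdef]
      simp only
      have : 0 < 1 / ((N + n : ℕ) : ℝ) := by positivity
      linarith
    calc B (N + n) ≤ B N * Real.exp (φ ((N + n : ℕ) : ℝ) - φ ((N : ℕ) : ℝ)) := h1
      _ ≤ B N * Real.exp ((1 - φ ((N : ℕ) : ℝ)) + α * Real.log ((N + n : ℕ) : ℝ)) :=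
          mul_le_mul_of_nonneg_left (Real.exp_le_exp.mpr hφle) (by linarith)
      _ = κ₂ * Real.exp (Real.log ((N + n : ℕ) : ℝ) * α) := by
          rw [hκ₂def, Real.exp_add]; ring_nf
      _ = κ₂ * ((N + n : ℕ) : ℝ) ^ α := by rw [← Real.rpow_def_of_pos hmpos]
  -- small values
  have hne : (Finset.Icc 1 N).Nonempty := ⟨1, Finset.mem_Icc.mpr ⟨le_refl 1, hN1⟩⟩
  set κ₁ : ℝ := (Finset.Icc 1 N).sup' hne B with hκ₁def
  have hκ₁ : ∀ m : ℕ, 1 ≤ m → m ≤ N → B m ≤ κ₁ := fun m h1 h2 =>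
    Finset.le_sup' B (Finset.mem_Icc.mpr ⟨h1, h2⟩)
  have hκ₁pos : 0 < κ₁ := lt_of_lt_of_le one_pos (le_trans (hB1 1 le_rfl) (hκ₁ 1 le_rfl hN1))
  refine ⟨κ₁ + κ₂, by linarith, ?_⟩
  intro m hm
  have hm1 : (1 : ℝ) ≤ (m : ℝ) := by exact_mod_cast hm
  have hone : (1 : ℝ) ≤ (m : ℝ) ^ α := by
    have h := Real.rpow_le_rpow_of_exponent_le hm1 hα0
    rwa [Real.rpow_zero] at h
  have hrnn : (0 : ℝ) ≤ (m : ℝ) ^ α := by linarith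
  by_cases hmN : N ≤ m
  · have h1 := htail m hmN
    nlinarith
  · have h1 := hκ₁ m hm (by omega)
    nlinarith
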